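/- For every CNF Γ, the CNF Γ ∪ μ(Γ) is unsatisfiable, where μ(Γ) is the set of clauses E such that the assignment ¬E minimally satisfies Γ. -/
import Mathlib


open Classical

abbrev Var := ℕ
abbrev Lit := Var × Bool

def negLit (l : Lit) : Lit := (l.1, !l.2)

abbrev Clause := Finset Lit

/-- A set of literals is tautological if it contains a complementary pair. -/
def Tauto (S : Finset Lit) : Prop := ∃ l ∈ S, negLit l ∈ S

abbrev CNF := Set Clause

abbrev Assign := Var → Bool

def SatLit (α : Assign) (l : Lit) : Prop := α l.1 = l.2
def SatClause (α : Assign) (C : Clause) : Prop := ∃ l ∈ C, SatLit α l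
def SatCNF (α : Assign) (Γ : CNF) : Prop := ∀ C ∈ Γ, SatClause α C
def Satisfiable (Γ : CNF) : Prop := ∃ α, SatCNF α Γ
def Equisat (Γ Δ : CNF) : Prop := Satisfiable Γ ↔ Satisfiable Δ

/-- `C` is a blocked clause for the literal `p` with respect to `Γ`. -/
def Blocked (C : Clause) (p : Lit) (Γ : CNF) : Prop :=
  p ∈ C ∧ ∀ D ∈ Γ, negLit p ∈ D → Tauto (C.erase p ∪ D.erase (negLit p))

def negSet (L : Finset Lit) : Finset Lit := L.image negLit

/-- `C` is a set-blocked clause for `L` with respect to `Γ`. -/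
def SetBlocked (C : Clause) (L : Finset Lit) (Γ : CNF) : Prop :=
  L.Nonempty ∧ L ⊆ C ∧
    ∀ D ∈ Γ, (D ∩ negSet L).Nonempty → D ∩ L = ∅ →
      Tauto ((C \ L) ∪ (D \ negSet L))

def varsClause (C : Clause) : Finset Var := C.image Prod.fst
def varsCNF (Γ : CNF) : Set Var := {v | ∃ C ∈ Γ, v ∈ varsClause C}

/-- Partial assignments. -/
abbrev PAssign := Var → Option Bool

def restrictClause (α : PAssign) (C : Clause) : Clause :=
  C.filter fun l => α l.1 ≠ some (!l.2)

def PSatClause' (α : PAssign) (C : Clause) : Prop := ∃ l ∈ C, α l.1 = some l.2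

def restrictCNF (α : PAssign) (Γ : CNF) : CNF :=
  {E | ∃ C ∈ Γ, ¬ PSatClause' α C ∧ E = restrictClause α C}

/-- `E` is a resolvent of `F` and `G`. -/
def Resolvent (E F G : Clause) : Prop :=
  ∃ (x : Var) (A B : Clause), x ∉ varsClause A ∧ x ∉ varsClause B ∧
    F = insert (x, true) A ∧ G = insert (x, false) B ∧
    E = A ∪ B ∧ ¬ Tauto (A ∪ B)

/-- One step of a resolution proof: add a resolvent or a weakening. -/
def ResStep (Γ Γ' : CNF) : Prop :=
  ∃ C, Γ' = Γ ∪ {C} ∧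
    ((∃ F ∈ Γ, ∃ G ∈ Γ, Resolvent C F G) ∨ (∃ D ∈ Γ, D ⊆ C ∧ ¬ Tauto C))

/-- A resolution proof (refutation) of `Γ`. -/
def ResProofOf (Γ : CNF) (prf : List CNF) : Prop :=
  prf.head? = some Γ ∧ (∃ Δ, prf.getLast? = some Δ ∧ (∅ : Clause) ∈ Δ) ∧
    List.Chain' ResStep prf

/-- One step of a unit propagation proof: resolve against a unit clause, or weaken. -/
def UnitStep (Γ Γ' : CNF) : Prop :=
  ∃ C, Γ' = Γ ∪ {C} ∧
    ((∃ l, ({negLit l} : Clause) ∈ Γ ∧ l.1 ∉ varsClause C ∧ insert l C ∈ Γ)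
      ∨ (∃ D ∈ Γ, D ⊆ C ∧ ¬ Tauto C))

/-- `Γ` has a unit propagation refutation. -/
def UPRefutes (Γ : CNF) : Prop :=
  ∃ prf : List CNF, prf.head? = some Γ ∧ (∃ Δ, prf.getLast? = some Δ ∧ (∅ : Clause) ∈ Δ) ∧
    List.Chain' UnitStep prf

def negUnits (L : Finset Lit) : CNF := {C | ∃ p ∈ L, C = {negLit p}}

/-- `Γ ⊢₁ C`. -/
def UPDerives (Γ : CNF) (C : Clause) : Prop := UPRefutes (Γ ∪ negUnits C)

/-- Partial assignments as consistent sets of literals. -/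
def Consistent (α : Set Lit) : Prop := ∀ l ∈ α, negLit l ∉ α
def PSatClause (α : Set Lit) (C : Clause) : Prop := ∃ l ∈ C, l ∈ α
def PSatCNF (α : Set Lit) (Γ : CNF) : Prop := ∀ C ∈ Γ, PSatClause α C
def MinSat (α : Set Lit) (Γ : CNF) : Prop :=
  Consistent α ∧ PSatCNF α Γ ∧ ∀ β ⊂ α, ¬ PSatCNF β Γ

/-- `μ(Γ)`: clauses whose negation minimally satisfies `Γ`. -/
def mu (Γ : CNF) : CNF := {E | MinSat (↑(E.image negLit)) Γ}

/-- Projection of `Γ` onto a literal. -/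
def proj (p : Lit) (Γ : CNF) : CNF := {E | ∃ D ∈ Γ, p ∈ D ∧ E = D.erase p}


lemma exists_minsat_subset (Γ : CNF) :
    ∀ n (β : Finset Lit), β.card = n → PSatCNF ↑β Γ →
      ∃ γ : Finset Lit, γ ⊆ β ∧ PSatCNF ↑γ Γ ∧
        ∀ δ ⊂ (↑γ : Set Lit), ¬ PSatCNF δ Γ := by
  intro n
  induction n using Nat.strong_induction_on with
  | _ n ih =>
    intro β hcard hsat
    by_cases hmin : ∀ δ ⊂ (↑β : Set Lit), ¬ PSatCNF δ Γ
    · exact ⟨β, subset_rfl, hsat, hmin⟩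
    · push_neg at hmin
      obtain ⟨δ, hδsub, hδsat⟩ := hmin
      have hδfin : δ.Finite := (β.finite_toSet).subset hδsub.subset
      have hss : hδfin.toFinset ⊂ β := by
        rw [← Finset.coe_ssubset, Set.Finite.coe_toFinset]; exact hδsub
      obtain ⟨γ, hγsub, hγsat, hγmin⟩ :=
        ih hδfin.toFinset.card (hcard ▸ Finset.card_lt_card hss) hδfin.toFinset rfl
          (by rw [Set.Finite.coe_toFinset]; exact hδsat)
      exact ⟨γ, hγsub.trans hss.subset, hγsat, hγmin⟩

/-- `Γ ∪ μ(Γ)` is unsatisfiable. -/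
theorem mu_unsat (Γ : CNF) (hfin : Γ.Finite) :
    ¬ Satisfiable (Γ ∪ mu Γ) := by
  rintro ⟨α, hα⟩
  have hΓ : SatCNF α Γ := fun C hC => hα C (Or.inl hC)
  -- finite set of literals satisfied by α appearing in Γ
  set T : Finset Lit := hfin.toFinset.biUnion
    (fun C => C.filter fun l => α l.1 = l.2) with hT
  have hTsat : PSatCNF ↑T Γ := by
    intro C hC
    obtain ⟨l, hl, hsl⟩ := hΓ C hC
    exact ⟨l, hl, by
      simp only [hT, Finset.coe_biUnion, Set.mem_iUnion, Finset.mem_coe,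
        Finset.mem_filter, Set.Finite.mem_toFinset]
      exact ⟨C, hC, hl, hsl⟩⟩
  obtain ⟨γ, hγT, hγsat, hγmin⟩ := exists_minsat_subset Γ T.card T rfl hTsat
  have hγα : ∀ l ∈ γ, α l.1 = l.2 := by
    intro l hl
    have := hγT hl
    simp only [hT, Finset.mem_biUnion, Finset.mem_filter] at this
    obtain ⟨C, _, _, h⟩ := this
    exact h
  have hcons : Consistent ↑γ := by
    intro l hl hnl
    have h1 := hγα l hl
    have h2 := hγα (negLit l) hnl
    simp [negLit, h1] at h2
  -- E := γ.image negLit is in mu Γ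
  set E : Clause := γ.image negLit with hE
  have hEE : E.image negLit = γ := by
    ext l
    simp only [hE, Finset.mem_image]
    constructor
    · rintro ⟨m, ⟨k, hk, rfl⟩, rfl⟩
      simpa [negLit] using hk
    · intro hl
      exact ⟨negLit l, ⟨l, hl, rfl⟩, by simp [negLit]⟩
  have hEmu : E ∈ mu Γ := by
    refine ⟨?_, ?_, ?_⟩ <;> rw [hEE]
    · exact hcons
    · exact hγsat
    · exact hγmin
  obtain ⟨l, hlE, hsl⟩ := hα E (Or.inr hEmu)
  obtain ⟨m, hm, rfl⟩ := Finset.mem_image.mp hlE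
  have := hγα m hm
  simp only [SatLit, negLit] at hsl
  rw [this] at hsl
  simp at hsl
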